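/- Let f be analytic on the closed ball B_{≤r1} with r1 > 0 and f(0) ≠ 0, and set r2 = sup{ r : 0 < r ≤ r1 and |f|_r = |f(0)| }. Then r2 > 0, and there exists a unique power series g analytic on the open ball B_{<r2} such that f(z) g(z) = 1 for all z with |z| < r2. -/

import Mathlib

open Filter Topology

variable {F : Type*} [NontriviallyNormedField F]

/-- Value of the power series with coefficients `a` at `z`. -/
noncomputable def psEval (a : ℕ → F) (z : F) : F := ∑' n : ℕ, a n * z ^ n

/-- Value of the Laurent series with coefficients `c` at `z`. -/
noncomputable def lEval (c : ℤ → F) (z : F) : F := ∑' n : ℤ, c n * z ^ n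

/-- Gauss norm `|f|_r = sup_n |a_n| r^n` of a power series. -/
noncomputable def pNorm (a : ℕ → F) (r : ℝ) : ℝ := ⨆ n : ℕ, ‖a n‖ * r ^ n

/-- Gauss norm `|f|_r = sup_n |c_n| r^n` of a Laurent series. -/
noncomputable def lNorm (c : ℤ → F) (r : ℝ) : ℝ := ⨆ n : ℤ, ‖c n‖ * r ^ n

/-- The Laurent series `c` is analytic on the annulus `A[r1,r2]`. -/
def LaurentOn (c : ℤ → F) (r1 r2 : ℝ) : Prop :=
  ∀ r : ℝ, r1 ≤ r → r ≤ r2 → Tendsto (fun n : ℤ => ‖c n‖ * r ^ n) cofinite (nhds 0)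

/-- The Laurent series `c` is analytic on `A[r1,∞)`. -/
def LaurentOnInfty (c : ℤ → F) (r1 : ℝ) : Prop :=
  ∀ r : ℝ, r1 ≤ r → Tendsto (fun n : ℤ => ‖c n‖ * r ^ n) cofinite (nhds 0)

/-- The power series `a` is analytic on the closed ball `B_{≤ r}`. -/
def PSOnClosed (a : ℕ → F) (r : ℝ) : Prop :=
  Tendsto (fun n : ℕ => ‖a n‖ * r ^ n) atTop (nhds 0)

/-- The power series `a` is analytic on the open ball `B_{< R}`. -/
def PSOnOpen (a : ℕ → F) (R : ℝ) : Prop :=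
  ∀ r : ℝ, 0 < r → r < R → Tendsto (fun n : ℕ => ‖a n‖ * r ^ n) atTop (nhds 0)

/-- The power series `a` is entire: it converges on all of `F`. -/
def Entire (a : ℕ → F) : Prop :=
  ∀ r : ℝ, 0 < r → Tendsto (fun n : ℕ => ‖a n‖ * r ^ n) atTop (nhds 0)

/-- `k(f,r)` for a Laurent series. -/
noncomputable def kk (c : ℤ → F) (r : ℝ) : ℤ := sInf {n : ℤ | ‖c n‖ * r ^ n = lNorm c r}

/-- `K(f,r)` for a Laurent series. -/
noncomputable def KK (c : ℤ → F) (r : ℝ) : ℤ := sSup {n : ℤ | ‖c n‖ * r ^ n = lNorm c r}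

/-- Product of two Laurent series. -/
noncomputable def laurentMul (c d : ℤ → F) : ℤ → F := fun n => ∑' i : ℤ, c i * d (n - i)

/-- The Laurent series `1`. -/
noncomputable def laurentOne : ℤ → F := fun n => if n = 0 then 1 else 0

/-- Gauss norm of a polynomial. -/
noncomputable def pgNorm (P : Polynomial F) (r : ℝ) : ℝ := ⨆ n : ℕ, ‖P.coeff n‖ * r ^ n

/-- `k(P,r)` for a polynomial. -/
noncomputable def kP (P : Polynomial F) (r : ℝ) : ℕ :=
  sInf {n : ℕ | ‖P.coeff n‖ * r ^ n = pgNorm P r}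

/-- `K(P,r)` for a polynomial. -/
noncomputable def KP (P : Polynomial F) (r : ℝ) : ℕ :=
  sSup {n : ℕ | ‖P.coeff n‖ * r ^ n = pgNorm P r}

/-- A polynomial regarded as a Laurent series. -/
noncomputable def polyToLaurent (P : Polynomial F) : ℤ → F :=
  fun n => if 0 ≤ n then P.coeff n.toNat else 0

/-- `f` vanishes to order exactly `m` at `z0`, as witnessed by a convergent local
power series expansion of `f` about `z0`. -/
def HasOrderAt (f : F → F) (z0 : F) (m : ℕ) : Prop :=
  ∃ δ > (0 : ℝ), ∃ b : ℕ → F,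
    (∀ z : F, ‖z - z0‖ < δ → f z = ∑' n : ℕ, b n * (z - z0) ^ n) ∧
    (∀ j < m, b j = 0) ∧ b m ≠ 0

/-- Order of vanishing at `0` of a power series. -/
noncomputable def ord0 (c : ℕ → F) : ℕ := sInf {n : ℕ | c n ≠ 0}

/-- Radius of convergence of a power series: the sup of the radii `r` such that
the terms `|c_j| r^j` tend to `0`. -/
noncomputable def convRadius (c : ℕ → F) : ENNReal :=
  ⨆ (r : NNReal) (_ : Tendsto (fun j : ℕ => ‖c j‖ * (r : ℝ) ^ j) atTop (nhds 0)), (r : ENNReal)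

lemma psEval_at_zero (a : ℕ → F) : psEval a 0 = a 0 := by
  unfold psEval
  rw [tsum_eq_single 0 (fun n hn => by simp [zero_pow hn])]
  simp

lemma pow_split {t r : ℝ} (hr : r ≠ 0) (n : ℕ) : t ^ n = r ^ n * (t / r) ^ n := by
  rw [div_pow, mul_div_cancel₀ _ (pow_ne_zero n hr)]

lemma summable_of_psOnOpen [CompleteSpace F] {h : ℕ → F} {R : ℝ} (hconv : PSOnOpen h R) {z : F}
    (hz : ‖z‖ < R) : Summable (fun n => h n * z ^ n) := by
  rcases eq_or_ne z 0 with rfl | hz0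
  · apply summable_of_ne_finset_zero (s := {0})
    intro n hn
    simp only [Finset.mem_singleton] at hn
    simp [zero_pow hn]
  · have hz0' : 0 < ‖z‖ := norm_pos_iff.mpr hz0
    set r := (‖z‖ + R) / 2 with hr
    have hr1 : ‖z‖ < r := by rw [hr]; linarith
    have hr0 : 0 < r := lt_trans hz0' hr1
    have hrR : r < R := by rw [hr]; linarith
    obtain ⟨C, hC⟩ := (hconv r hr0 hrR).bddAbove_range
    have hCb : ∀ n, ‖h n‖ * r ^ n ≤ C := fun n => hC (Set.mem_range_self n)
    have hgeo : Summable (fun n : ℕ => C * (‖z‖ / r) ^ n) :=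
      (summable_geometric_of_lt_one (by positivity)
        ((div_lt_one hr0).mpr hr1)).mul_left C
    have hle : ∀ n : ℕ, ‖h n * z ^ n‖ ≤ C * (‖z‖ / r) ^ n := by
      intro n
      calc ‖h n * z ^ n‖ = (‖h n‖ * r ^ n) * (‖z‖ / r) ^ n := by
            rw [norm_mul, norm_pow, pow_split (ne_of_gt hr0) n]; ring
        _ ≤ C * (‖z‖ / r) ^ n :=
            mul_le_mul_of_nonneg_right (hCb n) (pow_nonneg (by positivity) n)
    exact Summable.of_norm
      (Summable.of_nonneg_of_le (fun n => norm_nonneg _) hle hgeo)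

lemma ps_eq_zero_of_vanish [CompleteSpace F] {h : ℕ → F} {R : ℝ} (hR : 0 < R) (hconv : PSOnOpen h R)
    (hz : ∀ z : F, ‖z‖ < R → ∑' n, h n * z ^ n = 0) : ∀ n, h n = 0 := by
  intro n
  induction n using Nat.strong_induction_on with
  | _ m ih =>
  set r0 := R / 2 with hr0def
  have hr00 : 0 < r0 := by positivity
  have hr0R : r0 < R := by rw [hr0def]; linarith
  obtain ⟨C0, hC0⟩ := (hconv r0 hr00 hr0R).bddAbove_range
  set C := max C0 1 with hCdef
  have hC1 : 0 < C := lt_of_lt_of_le one_pos (le_max_right _ _)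
  have hCb : ∀ k, ‖h k‖ * r0 ^ k ≤ C := fun k =>
    le_trans (hC0 (Set.mem_range_self k)) (le_max_left _ _)
  have hP : 0 < r0 ^ (m + 1) := pow_pos hr00 _
  have key : ∀ ε : ℝ, 0 < ε → ‖h m‖ ≤ ε := by
    intro ε hε
    obtain ⟨z, hz0, hzlt⟩ := NormedField.exists_norm_lt F
      (lt_min (by positivity : (0:ℝ) < r0 / 2)
        (by positivity : (0:ℝ) < ε * r0 ^ (m + 1) / (2 * C)))
    set t := ‖z‖ with htdef
    have ht0 : 0 < t := hz0
    have ht1 : t < r0 / 2 := lt_of_lt_of_le hzlt (min_le_left _ _)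
    have ht2 : t < ε * r0 ^ (m + 1) / (2 * C) := lt_of_lt_of_le hzlt (min_le_right _ _)
    have htR : t < R := by linarith
    set ρ := t / r0 with hρdef
    have hρ0 : 0 ≤ ρ := by positivity
    have hρhalf : ρ ≤ 1 / 2 := by rw [hρdef, div_le_div_iff₀ hr00 two_pos]; linarith
    have hρ1 : ρ < 1 := lt_of_le_of_lt hρhalf (by norm_num)
    have hsum := summable_of_psOnOpen hconv htR
    have hsplit := Summable.sum_add_tsum_nat_add (f := fun n => h n * z ^ n) (m + 1) hsum
    have hfin : ∑ i ∈ Finset.range (m + 1), h i * z ^ i = h m * z ^ m := by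
      rw [Finset.sum_eq_single_of_mem m (Finset.self_mem_range_succ m)]
      intro i hi hne
      rw [ih i (by simp only [Finset.mem_range] at hi; omega), zero_mul]
    have hterm : ∀ k : ℕ, ‖h k‖ * t ^ k ≤ C * ρ ^ k := by
      intro k
      calc ‖h k‖ * t ^ k = (‖h k‖ * r0 ^ k) * ρ ^ k := by
            rw [pow_split (ne_of_gt hr00) k]; ring
        _ ≤ C * ρ ^ k := mul_le_mul_of_nonneg_right (hCb k) (pow_nonneg hρ0 _)
    have htermn : ∀ n : ℕ, ‖h (n + (m + 1)) * z ^ (n + (m + 1))‖ ≤ (C * ρ ^ (m + 1)) * ρ ^ n := by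
      intro n
      rw [norm_mul, norm_pow, ← htdef]
      calc ‖h (n + (m + 1))‖ * t ^ (n + (m + 1)) ≤ C * ρ ^ (n + (m + 1)) := hterm _
        _ = (C * ρ ^ (m + 1)) * ρ ^ n := by rw [pow_add]; ring
    have hgeo : Summable (fun n : ℕ => (C * ρ ^ (m + 1)) * ρ ^ n) :=
      (summable_geometric_of_lt_one hρ0 hρ1).mul_left _
    have hnorms : Summable (fun n : ℕ => ‖h (n + (m + 1)) * z ^ (n + (m + 1))‖) :=
      Summable.of_nonneg_of_le (fun _ => norm_nonneg _) htermn hgeo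
    have htail : ‖∑' n : ℕ, h (n + (m + 1)) * z ^ (n + (m + 1))‖ ≤
        (C * ρ ^ (m + 1)) * (1 - ρ)⁻¹ := by
      calc ‖∑' n : ℕ, h (n + (m + 1)) * z ^ (n + (m + 1))‖
          ≤ ∑' n : ℕ, ‖h (n + (m + 1)) * z ^ (n + (m + 1))‖ := norm_tsum_le_tsum_norm hnorms
        _ ≤ ∑' n : ℕ, (C * ρ ^ (m + 1)) * ρ ^ n := Summable.tsum_le_tsum htermn hnorms hgeo
        _ = (C * ρ ^ (m + 1)) * (1 - ρ)⁻¹ := by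
            rw [tsum_mul_left, tsum_geometric_of_lt_one hρ0 hρ1]
    have hmz : h m * z ^ m = - ∑' n : ℕ, h (n + (m + 1)) * z ^ (n + (m + 1)) := by
      have h1 : h m * z ^ m + ∑' n : ℕ, h (n + (m + 1)) * z ^ (n + (m + 1)) = 0 := by
        rw [← hfin, hsplit]; exact hz z htR
      exact eq_neg_of_add_eq_zero_left h1
    have hnorm_eq : ‖h m‖ * t ^ m ≤ (C * ρ ^ (m + 1)) * (1 - ρ)⁻¹ := by
      have hh : ‖h m * z ^ m‖ = ‖h m‖ * t ^ m := by rw [norm_mul, norm_pow]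
      rw [← hh, hmz, norm_neg]; exact htail
    have hinv2 : (1 - ρ)⁻¹ ≤ 2 := by
      rw [inv_le_comm₀ (by linarith) (by norm_num)]
      norm_num; linarith
    have hstep : ‖h m‖ * t ^ m ≤ (2 * C * t / r0 ^ (m + 1)) * t ^ m := by
      calc ‖h m‖ * t ^ m ≤ (C * ρ ^ (m + 1)) * (1 - ρ)⁻¹ := hnorm_eq
        _ ≤ (C * ρ ^ (m + 1)) * 2 := mul_le_mul_of_nonneg_left hinv2 (by positivity)
        _ = (2 * C * t / r0 ^ (m + 1)) * t ^ m := by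
            rw [hρdef, div_pow]; field_simp; ring
    have hfinal : ‖h m‖ ≤ 2 * C * t / r0 ^ (m + 1) :=
      le_of_mul_le_mul_right hstep (pow_pos ht0 m)
    have hlast : 2 * C * t / r0 ^ (m + 1) ≤ ε := by
      rw [div_le_iff₀ hP]
      have h2 := (lt_div_iff₀ (by positivity : (0:ℝ) < 2 * C)).mp ht2
      nlinarith [h2]
    exact hfinal.trans hlast
  have hle : ‖h m‖ ≤ 0 := by
    by_contra hc
    push_neg at hc
    have := key (‖h m‖ / 2) (by linarith)
    linarith
  exact norm_le_zero_iff.mp hle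

lemma tendsto_geom_aux {f : ℕ → ℝ} {B ρ : ℝ} (hρ0 : 0 ≤ ρ) (hρ1 : ρ < 1)
    (h0 : ∀ n, 0 ≤ f n) (hle : ∀ n, f n ≤ B * ρ ^ n) : Tendsto f atTop (nhds 0) :=
  squeeze_zero h0 hle
    (by simpa using (tendsto_pow_atTop_nhds_zero_of_lt_one hρ0 hρ1).const_mul B)

/-- **Local invertibility.** If `f` is analytic on `B_{≤ r1}` with `r1 > 0` and
`f(0) ≠ 0`, and `r2 = sup { r : 0 < r ≤ r1 ∧ |f|_r = |f(0)| }`, then `r2 > 0` and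
there is a unique power series `g` analytic on `B_{< r2}` with `f g = 1` there. -/
theorem stmt6 {F : Type*} [NontriviallyNormedField F] [CompleteSpace F] [IsAlgClosed F]
    (hna : IsNonarchimedean (fun x : F => ‖x‖))
    (r1 : ℝ) (hr1 : 0 < r1)
    (a : ℕ → F) (ha : PSOnClosed a r1) (h0 : psEval a 0 ≠ 0) :
    0 < sSup {r : ℝ | 0 < r ∧ r ≤ r1 ∧ pNorm a r = ‖psEval a 0‖} ∧
      ∃! g : ℕ → F,
        PSOnOpen g (sSup {r : ℝ | 0 < r ∧ r ≤ r1 ∧ pNorm a r = ‖psEval a 0‖}) ∧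
        ∀ z : F, ‖z‖ < sSup {r : ℝ | 0 < r ∧ r ≤ r1 ∧ pNorm a r = ‖psEval a 0‖} →
          psEval a z * psEval g z = 1 := by
  haveI : IsUltrametricDist F :=
    IsUltrametricDist.isUltrametricDist_of_isNonarchimedean_norm hna
  rw [psEval_at_zero a]
  set S : Set ℝ := {r : ℝ | 0 < r ∧ r ≤ r1 ∧ pNorm a r = ‖a 0‖} with hSdef
  have ha0ne : a 0 ≠ 0 := by rwa [psEval_at_zero a] at h0
  have ha0pos : 0 < ‖a 0‖ := norm_pos_iff.mpr ha0ne
  obtain ⟨C, hCmem⟩ := ha.bddAbove_range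
  have hC : ∀ n, ‖a n‖ * r1 ^ n ≤ C := fun n => hCmem (Set.mem_range_self n)
  have hC0 : ‖a 0‖ ≤ C := by simpa using hC 0
  have hCpos : 0 < C := lt_of_lt_of_le ha0pos hC0
  -- boundedness of the Gauss norm terms, for 0 ≤ r ≤ r1
  have hbdd : ∀ r : ℝ, 0 ≤ r → r ≤ r1 →
      BddAbove (Set.range fun n : ℕ => ‖a n‖ * r ^ n) := by
    intro r h0r hrr1
    refine ⟨C, ?_⟩
    rintro x ⟨n, rfl⟩
    exact le_trans (mul_le_mul_of_nonneg_left
      (pow_le_pow_left₀ h0r hrr1 n) (norm_nonneg _)) (hC n)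
  -- the witness radius
  set rs : ℝ := min r1 (r1 * ‖a 0‖ / (2 * C)) with hrsdef
  have hrs0 : 0 < rs := lt_min hr1 (by positivity)
  have hrsr1 : rs ≤ r1 := min_le_left _ _
  have hsmall : ∀ n : ℕ, n ≠ 0 → ‖a n‖ * rs ^ n ≤ ‖a 0‖ / 2 := by
    intro n hn
    have hquot : rs / r1 ≤ ‖a 0‖ / (2 * C) := by
      rw [div_le_div_iff₀ hr1 (by positivity)]
      have h2 : rs ≤ r1 * ‖a 0‖ / (2 * C) := min_le_right _ _
      have h3 : (r1 * ‖a 0‖ / (2 * C)) * (2 * C) = r1 * ‖a 0‖ :=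
        div_mul_cancel₀ _ (by positivity)
      have h4 := mul_le_mul_of_nonneg_right h2 (by positivity : (0:ℝ) ≤ 2 * C)
      rw [h3] at h4
      linarith [h4, mul_comm r1 ‖a 0‖]
    calc ‖a n‖ * rs ^ n = (‖a n‖ * r1 ^ n) * (rs / r1) ^ n := by
          rw [pow_split (ne_of_gt hr1) n]; ring
      _ ≤ C * (rs / r1) ^ n :=
          mul_le_mul_of_nonneg_right (hC n) (pow_nonneg (by positivity) n)
      _ ≤ C * (rs / r1) ^ 1 := by
          apply mul_le_mul_of_nonneg_left _ hCpos.le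
          exact pow_le_pow_of_le_one (by positivity)
            ((div_le_one hr1).mpr hrsr1) (Nat.one_le_iff_ne_zero.mpr hn)
      _ = C * (rs / r1) := by ring
      _ ≤ C * (‖a 0‖ / (2 * C)) := mul_le_mul_of_nonneg_left hquot hCpos.le
      _ = ‖a 0‖ / 2 := by field_simp
  have hmemS : rs ∈ S := by
    refine ⟨hrs0, hrsr1, le_antisymm (ciSup_le ?_) ?_⟩
    · intro n
      cases n with
      | zero => simp
      | succ k =>
        exact le_trans (hsmall (k + 1) (Nat.succ_ne_zero k)) (by linarith)
    · simpa [pNorm] using le_ciSup (hbdd rs hrs0.le hrsr1) 0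
  have hSne : S.Nonempty := ⟨rs, hmemS⟩
  have hSbdd : BddAbove S := ⟨r1, fun r hr => hr.2.1⟩
  have hr2pos : 0 < sSup S := lt_of_lt_of_le hrs0 (le_csSup hSbdd hmemS)
  -- term bound on S
  have hterm : ∀ r ∈ S, ∀ n : ℕ, ‖a n‖ * r ^ n ≤ ‖a 0‖ := by
    intro r hr n
    have h1 : ‖a n‖ * r ^ n ≤ pNorm a r := le_ciSup (hbdd r hr.1.le hr.2.1) n
    exact h1.trans_eq hr.2.2
  refine ⟨hr2pos, ?_⟩
  -- the inverse power series
  set p : PowerSeries F := PowerSeries.mk a with hpdef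
  set g : ℕ → F := fun n => PowerSeries.coeff n p⁻¹ with hgdef
  have hpc : PowerSeries.constantCoeff p ≠ 0 := by
    simpa [hpdef, PowerSeries.constantCoeff_mk] using ha0ne
  have hconv : ∀ n : ℕ, ∑ ij ∈ Finset.HasAntidiagonal.antidiagonal n, a ij.1 * g ij.2 =
      if n = 0 then 1 else 0 := by
    intro n
    have h := congrArg (fun q => PowerSeries.coeff n q)
      (PowerSeries.mul_inv_cancel p hpc)
    simp only [PowerSeries.coeff_mul, PowerSeries.coeff_one, hpdef,
      PowerSeries.coeff_mk] at h
    simpa [hgdef, hpdef] using h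
  have hg0 : a 0 * g 0 = 1 := by
    have := hconv 0
    simpa [Finset.Nat.antidiagonal_zero] using this
  have hg0norm : ‖g 0‖ = ‖a 0‖⁻¹ := by
    have hg0' : g 0 = (a 0)⁻¹ := eq_inv_of_mul_eq_one_right hg0
    rw [hg0', norm_inv]
  have gbound : ∀ r ∈ S, ∀ n : ℕ, ‖g n‖ * r ^ n ≤ ‖a 0‖⁻¹ := by
    intro r hr n
    have hr0 : 0 < r := hr.1
    induction n using Nat.strong_induction_on with
    | _ n ih =>
    cases n with
    | zero => simp [hg0norm]
    | succ n =>
      have hmem : ((0 : ℕ), n + 1) ∈ Finset.HasAntidiagonal.antidiagonal (n + 1) := by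
        simp [Finset.HasAntidiagonal.mem_antidiagonal]
      have hsplit := Finset.add_sum_erase (Finset.HasAntidiagonal.antidiagonal (n + 1))
        (fun ij : ℕ × ℕ => a ij.1 * g ij.2) hmem
      have hc := hconv (n + 1)
      rw [if_neg (Nat.succ_ne_zero n)] at hc
      rw [← hsplit] at hc
      have h0' : a 0 * g (n + 1) =
          - ∑ ij ∈ (Finset.HasAntidiagonal.antidiagonal (n + 1)).erase (0, n + 1), a ij.1 * g ij.2 :=
        eq_neg_of_add_eq_zero_left hc
      have hsumbound : ‖∑ ij ∈ (Finset.HasAntidiagonal.antidiagonal (n + 1)).erase (0, n + 1),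
          a ij.1 * g ij.2‖ ≤ 1 / r ^ (n + 1) := by
        apply IsUltrametricDist.norm_sum_le_of_forall_le_of_nonneg (by positivity)
        intro ij hij
        obtain ⟨hne, hmem'⟩ := Finset.mem_erase.mp hij
        have hijsum : ij.1 + ij.2 = n + 1 := Finset.HasAntidiagonal.mem_antidiagonal.mp hmem'
        have hij1 : ij.1 ≠ 0 := by
          rintro hz
          exact hne (Prod.ext hz (by omega))
        have hj : ij.2 < n + 1 := by omega
        rw [le_div_iff₀ (by positivity)]
        calc ‖a ij.1 * g ij.2‖ * r ^ (n + 1)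
            = (‖a ij.1‖ * r ^ ij.1) * (‖g ij.2‖ * r ^ ij.2) := by
              rw [norm_mul, ← hijsum, pow_add]; ring
          _ ≤ ‖a 0‖ * ‖a 0‖⁻¹ :=
              mul_le_mul (hterm r hr ij.1) (ih ij.2 hj) (by positivity) ha0pos.le
          _ = 1 := mul_inv_cancel₀ (ne_of_gt ha0pos)
      have hgn : ‖g (n + 1)‖ = ‖a 0‖⁻¹ * ‖∑ ij ∈ (Finset.HasAntidiagonal.antidiagonal (n + 1)).erase (0, n + 1),
          a ij.1 * g ij.2‖ := by
        have hexp : g (n + 1) = (a 0)⁻¹ *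
            (- ∑ ij ∈ (Finset.HasAntidiagonal.antidiagonal (n + 1)).erase (0, n + 1), a ij.1 * g ij.2) := by
          rw [← h0', inv_mul_cancel_left₀ ha0ne]
        rw [hexp, norm_mul, norm_neg, norm_inv]
      calc ‖g (n + 1)‖ * r ^ (n + 1)
          = ‖a 0‖⁻¹ * (‖∑ ij ∈ (Finset.HasAntidiagonal.antidiagonal (n + 1)).erase (0, n + 1),
            a ij.1 * g ij.2‖ * r ^ (n + 1)) := by rw [hgn]; ring
        _ ≤ ‖a 0‖⁻¹ * ((1 / r ^ (n + 1)) * r ^ (n + 1)) := by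
            apply mul_le_mul_of_nonneg_left _ (by positivity)
            exact mul_le_mul_of_nonneg_right hsumbound (by positivity)
        _ = ‖a 0‖⁻¹ := by
            rw [one_div, inv_mul_cancel₀ (ne_of_gt (pow_pos hr0 (n + 1))), mul_one]
  -- g converges on the open ball of radius sSup S
  have hgopen : PSOnOpen g (sSup S) := by
    intro r' hr'0 hr'2
    obtain ⟨r, hrS, hlt⟩ := exists_lt_of_lt_csSup hSne hr'2
    have hr0 : 0 < r := hrS.1
    apply tendsto_geom_aux (B := ‖a 0‖⁻¹) (ρ := r' / r) (by positivity)
      ((div_lt_one hr0).mpr hlt) (fun n => by positivity)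
    intro n
    calc ‖g n‖ * r' ^ n = (‖g n‖ * r ^ n) * (r' / r) ^ n := by
          rw [pow_split (ne_of_gt hr0) n]; ring
      _ ≤ ‖a 0‖⁻¹ * (r' / r) ^ n :=
          mul_le_mul_of_nonneg_right (gbound r hrS n) (pow_nonneg (by positivity) n)
  -- the product identity
  have hmulg : ∀ z : F, ‖z‖ < sSup S → psEval a z * psEval g z = 1 := by
    intro z hz
    obtain ⟨r, hrS, hlt⟩ := exists_lt_of_lt_csSup hSne hz
    have hr0 : 0 < r := hrS.1
    have hρ0 : (0:ℝ) ≤ ‖z‖ / r := by positivity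
    have hρ1 : ‖z‖ / r < 1 := (div_lt_one hr0).mpr hlt
    have hgeo : Summable (fun n : ℕ => (‖z‖ / r) ^ n) :=
      summable_geometric_of_lt_one hρ0 hρ1
    have hasum : Summable (fun n : ℕ => ‖a n * z ^ n‖) := by
      have hlea : ∀ n : ℕ, ‖a n * z ^ n‖ ≤ ‖a 0‖ * (‖z‖ / r) ^ n := by
        intro n
        calc ‖a n * z ^ n‖ = (‖a n‖ * r ^ n) * (‖z‖ / r) ^ n := by
              rw [norm_mul, norm_pow, pow_split (ne_of_gt hr0) n]; ring
          _ ≤ ‖a 0‖ * (‖z‖ / r) ^ n :=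
              mul_le_mul_of_nonneg_right (hterm r hrS n) (pow_nonneg hρ0 n)
      exact Summable.of_nonneg_of_le (fun n => norm_nonneg _) hlea (hgeo.mul_left _)
    have hgsum : Summable (fun n : ℕ => ‖g n * z ^ n‖) := by
      have hleg : ∀ n : ℕ, ‖g n * z ^ n‖ ≤ ‖a 0‖⁻¹ * (‖z‖ / r) ^ n := by
        intro n
        calc ‖g n * z ^ n‖ = (‖g n‖ * r ^ n) * (‖z‖ / r) ^ n := by
              rw [norm_mul, norm_pow, pow_split (ne_of_gt hr0) n]; ring
          _ ≤ ‖a 0‖⁻¹ * (‖z‖ / r) ^ n :=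
              mul_le_mul_of_nonneg_right (gbound r hrS n) (pow_nonneg hρ0 n)
      exact Summable.of_nonneg_of_le (fun n => norm_nonneg _) hleg (hgeo.mul_left _)
    have hprod := tsum_mul_tsum_eq_tsum_sum_antidiagonal_of_summable_norm hasum hgsum
    have hinner : ∀ n : ℕ, ∑ ij ∈ Finset.HasAntidiagonal.antidiagonal n,
        (a ij.1 * z ^ ij.1) * (g ij.2 * z ^ ij.2) =
        (if n = 0 then (1:F) else 0) * z ^ n := by
      intro n
      rw [← hconv n, Finset.sum_mul]
      apply Finset.sum_congr rfl
      intro ij hij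
      have hijsum : ij.1 + ij.2 = n := Finset.HasAntidiagonal.mem_antidiagonal.mp hij
      rw [← hijsum, pow_add]; ring
    show (∑' n : ℕ, a n * z ^ n) * (∑' n : ℕ, g n * z ^ n) = 1
    rw [hprod]
    calc ∑' n : ℕ, ∑ ij ∈ Finset.HasAntidiagonal.antidiagonal n, (a ij.1 * z ^ ij.1) * (g ij.2 * z ^ ij.2)
        = ∑' n : ℕ, (if n = 0 then (1:F) else 0) * z ^ n := by
          exact tsum_congr hinner
      _ = 1 := by
          rw [tsum_eq_single 0 (fun n hn => by simp [if_neg hn])]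
          simp
  refine ⟨g, ⟨hgopen, hmulg⟩, ?_⟩
  -- uniqueness
  rintro g' ⟨hg'open, hg'mul⟩
  funext n
  have hdopen : PSOnOpen (fun k => g' k - g k) (sSup S) := by
    intro r h0r hrR
    apply squeeze_zero (fun k => by positivity)
      (g := fun k => ‖g' k‖ * r ^ k + ‖g k‖ * r ^ k)
    · intro k
      have := norm_sub_le (g' k) (g k)
      nlinarith [pow_pos h0r k, norm_nonneg (g' k), norm_nonneg (g k)]
    · simpa using (hg'open r h0r hrR).add (hgopen r h0r hrR)
  have hdvanish : ∀ z : F, ‖z‖ < sSup S → ∑' k : ℕ, (g' k - g k) * z ^ k = 0 := by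
    intro z hz
    have s1 := summable_of_psOnOpen hg'open hz
    have s2 := summable_of_psOnOpen hgopen hz
    have hv : psEval g' z = psEval g z := by
      have h1 := hg'mul z hz
      have h2 := hmulg z hz
      exact mul_left_cancel₀ (left_ne_zero_of_mul_eq_one h1) (h1.trans h2.symm)
    calc ∑' k : ℕ, (g' k - g k) * z ^ k
        = ∑' k : ℕ, (g' k * z ^ k - g k * z ^ k) := by
          apply tsum_congr; intro k; ring
      _ = (∑' k : ℕ, g' k * z ^ k) - ∑' k : ℕ, g k * z ^ k := Summable.tsum_sub s1 s2
      _ = 0 := by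
          have : psEval g' z - psEval g z = 0 := by rw [hv, sub_self]
          simpa [psEval] using this
  have := ps_eq_zero_of_vanish hr2pos hdopen hdvanish n
  exact sub_eq_zero.mp this
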